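/- Let p ∈ (0,1], q ∈ [0,1), C ≥ 0, β > 0, let h_max ≥ 1 be an integer, and let δ ≥ 0 be real. On a probability space, let H take values in {1, …, h_max} with P(H = h) = C·q^(h−1); let (K_i)_{i≥1} be i.i.d. geometric random variables on the positive integers with parameter p, independent of H; let g = Σ_{i=1}^{H} K_i; and let f be exponentially distributed with rate β, independent of (H, (K_i)). Define the reward r = 1 if f + g ≤ δ and r = 0 otherwise. Then r is a Bernoulli random variable with success probability P(r = 1) = C · Σ_{k=1}^{⌊δ⌋} [ (1 − e^(−β(δ−k))) · Σ_{h=1}^{min(k, h_max)} C(k−1, h−1) p^h (1−p)^(k−h) q^(h−1) ]. -/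

import Mathlib

open MeasureTheory ProbabilityTheory Real
open scoped ENNReal

lemma aux_choose_sum (h k : ℕ) (hh : 1 ≤ h) (hk : h + 1 ≤ k) :
    ∑ j ∈ Finset.Icc h (k-1), (j-1).choose (h-1) = (k-1).choose h := by
  have hmap : Finset.Icc h (k-1) = (Finset.Icc (h-1) (k-2)).map (addRightEmbedding 1) := by
    rw [Finset.map_add_right_Icc]
    congr 1 <;> omega
  rw [hmap, Finset.sum_map]
  simp only [addRightEmbedding_apply, Nat.add_sub_cancel]
  rw [Nat.sum_Icc_choose]
  congr 1 <;> omega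

lemma aux_nb_step (p : ℝ) (hp0 : 0 < p) (hp1 : p ≤ 1) (h k : ℕ) (hh : 1 ≤ h) (hk : 1 ≤ k) :
    ∑ j ∈ Finset.Icc 1 (k-1),
        ((j-1).choose (h-1) : ℝ) * p^h * (1-p)^(j-h) * (p * (1-p)^(k-j-1))
      = ((k-1).choose h : ℝ) * p^(h+1) * (1-p)^(k-(h+1)) := by
  by_cases hkh : k ≤ h
  · rw [Finset.sum_eq_zero, Nat.choose_eq_zero_of_lt (by omega), Nat.cast_zero, zero_mul, zero_mul]
    intro j hj
    simp only [Finset.mem_Icc] at hj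
    rw [Nat.choose_eq_zero_of_lt (by omega), Nat.cast_zero, zero_mul, zero_mul, zero_mul]
  · push_neg at hkh
    rw [← Finset.sum_subset (Finset.Icc_subset_Icc_left hh)
        (fun j hj hj' => by
          simp only [Finset.mem_Icc] at hj hj'
          rw [Nat.choose_eq_zero_of_lt (by omega), Nat.cast_zero, zero_mul, zero_mul, zero_mul])]
    have heq : ∀ j ∈ Finset.Icc h (k-1),
        ((j-1).choose (h-1) : ℝ) * p^h * (1-p)^(j-h) * (p * (1-p)^(k-j-1))
          = ((j-1).choose (h-1) : ℝ) * (p^(h+1) * (1-p)^(k-(h+1))) := by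
      intro j hj
      simp only [Finset.mem_Icc] at hj
      have hpow : (1-p)^(j-h) * (1-p)^(k-j-1) = (1-p)^(k-(h+1)) := by
        rw [← pow_add]; congr 1; omega
      rw [pow_succ, ← hpow]; ring
    rw [Finset.sum_congr rfl heq, ← Finset.sum_mul, ← Nat.cast_sum,
      aux_choose_sum h k hh (by omega)]
    ring

lemma aux_geom_tsum (p : ℝ) (hp0 : 0 < p) (hp1 : p ≤ 1) :
    ∑' k : ℕ, ENNReal.ofReal (p * (1-p)^k) = 1 := by
  have h1 : ∀ k : ℕ, ENNReal.ofReal (p * (1-p)^k)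
      = ENNReal.ofReal p * (ENNReal.ofReal (1-p))^k := by
    intro k
    rw [ENNReal.ofReal_mul hp0.le, ENNReal.ofReal_pow (by linarith)]
  simp_rw [h1]
  rw [ENNReal.tsum_mul_left, ENNReal.tsum_geometric]
  have h2 : (1:ℝ≥0∞) - ENNReal.ofReal (1-p) = ENNReal.ofReal p := by
    rw [← ENNReal.ofReal_one, ← ENNReal.ofReal_sub 1 (by linarith)]
    norm_num
  rw [h2, ENNReal.mul_inv_cancel (by simp [hp0]) ENNReal.ofReal_ne_top]

lemma aux_K_zero {Ω : Type*} [MeasurableSpace Ω] (μ : Measure Ω) [IsProbabilityMeasure μ]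
    (p : ℝ) (hp0 : 0 < p) (hp1 : p ≤ 1) (K : Ω → ℕ) (hK : Measurable K)
    (hpmf : ∀ k, 1 ≤ k → μ {ω | K ω = k} = ENNReal.ofReal (p * (1-p)^(k-1))) :
    μ {ω | K ω = 0} = 0 := by
  have hpre : ∀ c : ℕ, {ω | K ω = c} = K ⁻¹' {c} := fun c => rfl
  have hset : {ω | K ω ≠ 0} = ⋃ k : ℕ, K ⁻¹' {k + 1} := by
    ext ω; simp only [Set.mem_setOf_eq, Set.mem_iUnion, Set.mem_preimage,
      Set.mem_singleton_iff]
    constructor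
    · intro h; exact ⟨K ω - 1, by omega⟩
    · rintro ⟨k, hk⟩; omega
  have hU : μ {ω | K ω ≠ 0} = 1 := by
    rw [hset, measure_iUnion ?_ (fun k => hK (measurableSet_singleton (k+1)))]
    · have : ∀ k : ℕ, μ (K ⁻¹' {k + 1}) = ENNReal.ofReal (p * (1-p)^k) := by
        intro k; rw [← hpre, hpmf (k+1) (by omega)]; norm_num
      simp_rw [this]
      exact aux_geom_tsum p hp0 hp1
    · intro i j hij
      simp only [Function.onFun, Set.disjoint_left, Set.mem_preimage, Set.mem_singleton_iff]
      intro ω h1 h2; omega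
  have hcompl : {ω | K ω = 0} = {ω | K ω ≠ 0}ᶜ := by
    ext ω; simp
  have hmeas : MeasurableSet {ω | K ω ≠ 0} := by
    rw [hset]; exact MeasurableSet.iUnion fun k => hK (measurableSet_singleton _)
  rw [hcompl, measure_compl hmeas (measure_ne_top μ _), hU, measure_univ, tsub_self]

theorem reward_bernoulli {Ω : Type*} [MeasurableSpace Ω]
    (μ : Measure Ω) [IsProbabilityMeasure μ]
    (p q C β δ : ℝ) (hp0 : 0 < p) (hp1 : p ≤ 1) (hq0 : 0 ≤ q) (hq1 : q < 1)
    (hC : 0 ≤ C) (hβ : 0 < β) (hδ : 0 ≤ δ)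
    (hmax : ℕ) (hhmax : 1 ≤ hmax)
    (H : Ω → ℕ) (K : ℕ → Ω → ℕ) (f : Ω → ℝ)
    (hHmeas : Measurable H) (hKmeas : ∀ i, Measurable (K i)) (hfmeas : Measurable f)
    (hHrange : ∀ ω, H ω ∈ Finset.Icc 1 hmax)
    (hHpmf : ∀ h ∈ Finset.Icc 1 hmax,
      μ {ω | H ω = h} = ENNReal.ofReal (C * q ^ (h - 1)))
    (hKpmf : ∀ i k, 1 ≤ k →
      μ {ω | K i ω = k} = ENNReal.ofReal (p * (1 - p) ^ (k - 1)))
    (hIndep : iIndepFun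
      (fun o : Option ℕ => Option.elim o H K) μ)
    (hfexp : Measure.map f μ = volume.withDensity (exponentialPDF β))
    (hfIndep : IndepFun f
      (fun ω => fun o : Option ℕ => Option.elim o (H ω) (fun i => K i ω)) μ) :
    μ {ω | f ω + ((∑ i ∈ Finset.range (H ω), K i ω : ℕ) : ℝ) ≤ δ} =
      ENNReal.ofReal (C * ∑ k ∈ Finset.Icc 1 ⌊δ⌋₊,
        (1 - Real.exp (-β * (δ - k))) *
          ∑ h ∈ Finset.Icc 1 (min k hmax),
            ((k - 1).choose (h - 1) : ℝ) * p ^ h * (1 - p) ^ (k - h) * q ^ (h - 1)) := by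
  -- notation
  set L : Option ℕ → Ω → ℕ := fun o => Option.elim o H K with hLdef
  have hLmeas : ∀ o, Measurable (L o) := by rintro (_|i); exacts [hHmeas, hKmeas i]
  set S : ℕ → Ω → ℕ := fun h ω => ∑ i ∈ Finset.range h, K i ω with hSdef
  have hSmeas : ∀ h, Measurable (S h) := fun h => Finset.measurable_sum _ fun i _ => hKmeas i
  set g : Ω → ℕ := fun ω => S (H ω) ω with hgdef
  -- K never 0
  have hK0 : ∀ i, μ {ω | K i ω = 0} = 0 := fun i =>
    aux_K_zero μ p hp0 hp1 (K i) (hKmeas i) (hKpmf i)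
  have hS0 : ∀ h, 1 ≤ h → μ {ω | S h ω = 0} = 0 := by
    intro h hh
    refine measure_mono_null (fun ω hω => ?_) (hK0 0)
    simp only [Set.mem_setOf_eq, hSdef] at hω ⊢
    exact (Finset.sum_eq_zero_iff.1 hω) 0 (Finset.mem_range.2 hh)
  -- independence of partial sums and individual variables
  have hsum_eq : ∀ h : ℕ,
      (∑ o ∈ (Finset.range h).map ⟨some, Option.some_injective ℕ⟩, L o) = S h := by
    intro h; ext ω
    rw [Finset.sum_apply]
    rw [Finset.sum_map]
    rfl
  have hSK_indep : ∀ h, IndepFun (S h) (K h) μ := by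
    intro h
    have hni : (some h) ∉ (Finset.range h).map ⟨some, Option.some_injective ℕ⟩ := by
      simp [Finset.mem_map]
    have := hIndep.indepFun_finsetSum_of_notMem hLmeas hni
    rwa [hsum_eq h] at this
  have hHS_indep : ∀ h, IndepFun H (S h) μ := by
    intro h
    have hni : (none : Option ℕ) ∉ (Finset.range h).map ⟨some, Option.some_injective ℕ⟩ := by
      simp [Finset.mem_map]
    have := hIndep.indepFun_finsetSum_of_notMem hLmeas hni
    rw [hsum_eq h] at this
    exact this.symm
  -- negative binomial law of S h
  have hnb : ∀ h, 1 ≤ h → ∀ k, 1 ≤ k → μ {ω | S h ω = k}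
      = ENNReal.ofReal (((k-1).choose (h-1) : ℝ) * p^h * (1-p)^(k-h)) := by
    intro h hh
    induction h, hh using Nat.le_induction with
    | base =>
      intro k hk
      have hset : {ω | S 1 ω = k} = {ω | K 0 ω = k} := by
        ext ω; simp [hSdef, Finset.sum_range_one]
      rw [hset, hKpmf 0 k hk]
      congr 1
      simp only [Nat.sub_self, Nat.choose_zero_right, Nat.cast_one, pow_one]
      ring
    | succ h hh IH =>
      intro k hk
      have hpre : {ω | S (h+1) ω = k}
          = ⋃ j ∈ Finset.range (k+1), (S h ⁻¹' {j} ∩ K h ⁻¹' {k - j}) := by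
        ext ω
        simp only [Set.mem_setOf_eq, Set.mem_iUnion, Set.mem_inter_iff, Set.mem_preimage,
          Set.mem_singleton_iff, Finset.mem_range, hSdef, Finset.sum_range_succ]
        constructor
        · intro hω; exact ⟨∑ i ∈ Finset.range h, K i ω, by omega, rfl, by omega⟩
        · rintro ⟨j, hj, h1, h2⟩; omega
      rw [hpre, measure_biUnion_finset ?_ ?_]
      rotate_left
      · intro i hi j hj hij
        simp only [Function.onFun, Set.disjoint_left, Set.mem_inter_iff, Set.mem_preimage,
          Set.mem_singleton_iff]
        rintro ω ⟨h1, -⟩ ⟨h2, -⟩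
        exact hij (h1 ▸ h2 ▸ rfl)
      · exact fun j _ => ((hSmeas h) (measurableSet_singleton _)).inter
          ((hKmeas h) (measurableSet_singleton _))
      have hterm : ∀ j ∈ Finset.range (k+1),
          μ (S h ⁻¹' {j} ∩ K h ⁻¹' {k - j}) = μ (S h ⁻¹' {j}) * μ (K h ⁻¹' {k-j}) :=
        fun j _ => (hSK_indep h).measure_inter_preimage_eq_mul _ _
          (measurableSet_singleton j) (measurableSet_singleton (k-j))
      rw [Finset.sum_congr rfl hterm]
      have hsub : Finset.Icc 1 (k-1) ⊆ Finset.range (k+1) := by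
        intro j hj; simp only [Finset.mem_Icc, Finset.mem_range] at *; omega
      have hzero : ∀ j ∈ Finset.range (k+1), j ∉ Finset.Icc 1 (k-1) →
          μ (S h ⁻¹' {j}) * μ (K h ⁻¹' {k-j}) = 0 := by
        intro j hj hj'
        simp only [Finset.mem_range, Finset.mem_Icc] at hj hj'
        have hcase : j = 0 ∨ j = k := by omega
        rcases hcase with rfl | h2
        · have : μ (S h ⁻¹' {0}) = 0 := hS0 h hh
          rw [this, zero_mul]
        · have hkk : μ (K h ⁻¹' ({0} : Set ℕ)) = 0 := hK0 h
          rw [h2, Nat.sub_self, hkk, mul_zero]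
      rw [← Finset.sum_subset hsub hzero]
      have hterm2 : ∀ j ∈ Finset.Icc 1 (k-1),
          μ (S h ⁻¹' {j}) * μ (K h ⁻¹' {k-j})
            = ENNReal.ofReal
                (((j-1).choose (h-1) : ℝ) * p^h * (1-p)^(j-h) * (p * (1-p)^(k-j-1))) := by
        intro j hj
        simp only [Finset.mem_Icc] at hj
        have h1 : μ (S h ⁻¹' {j}) = ENNReal.ofReal (((j-1).choose (h-1) : ℝ) * p^h * (1-p)^(j-h)) :=
          IH j hj.1
        have h2 : μ (K h ⁻¹' {k-j}) = ENNReal.ofReal (p * (1-p)^(k-j-1)) :=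
          hKpmf h (k-j) (by omega)
        have h1p : (0:ℝ) ≤ 1 - p := by linarith
        rw [h1, h2, ← ENNReal.ofReal_mul (mul_nonneg
          (mul_nonneg (Nat.cast_nonneg _) (pow_nonneg hp0.le _)) (pow_nonneg h1p _))]
      have h1p : (0:ℝ) ≤ 1 - p := by linarith
      rw [Finset.sum_congr rfl hterm2,
        ← ENNReal.ofReal_sum_of_nonneg (fun j _ =>
          mul_nonneg (mul_nonneg (mul_nonneg (Nat.cast_nonneg _)
            (pow_nonneg hp0.le _)) (pow_nonneg h1p _))
            (mul_nonneg hp0.le (pow_nonneg h1p _))),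
        aux_nb_step p hp0 hp1 h k hh hk]
      norm_num

  -- law of g
  have hg : ∀ k, 1 ≤ k → μ {ω | g ω = k}
      = ENNReal.ofReal (C * ∑ h ∈ Finset.Icc 1 (min k hmax),
          ((k - 1).choose (h - 1) : ℝ) * p ^ h * (1 - p) ^ (k - h) * q ^ (h - 1)) := by
    intro k hk
    have hpre : {ω | g ω = k} = ⋃ h ∈ Finset.Icc 1 hmax, (H ⁻¹' {h} ∩ S h ⁻¹' {k}) := by
      ext ω
      simp only [Set.mem_setOf_eq, Set.mem_iUnion, Set.mem_inter_iff, Set.mem_preimage,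
        Set.mem_singleton_iff, hgdef, exists_prop]
      constructor
      · intro hω; exact ⟨H ω, hHrange ω, rfl, hω⟩
      · rintro ⟨h, hmem, h1, h2⟩; rw [h1]; exact h2
    rw [hpre, measure_biUnion_finset ?_ ?_]
    rotate_left
    · intro i hi j hj hij
      simp only [Function.onFun, Set.disjoint_left, Set.mem_inter_iff, Set.mem_preimage,
        Set.mem_singleton_iff]
      rintro ω ⟨h1, -⟩ ⟨h2, -⟩
      exact hij (h1 ▸ h2 ▸ rfl)
    · exact fun h _ => (hHmeas (measurableSet_singleton _)).inter
        ((hSmeas h) (measurableSet_singleton _))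
    have h1p : (0:ℝ) ≤ 1 - p := by linarith
    have hterm : ∀ h ∈ Finset.Icc 1 hmax, μ (H ⁻¹' {h} ∩ S h ⁻¹' {k})
        = ENNReal.ofReal ((C * q^(h-1)) * (((k-1).choose (h-1) : ℝ) * p^h * (1-p)^(k-h))) := by
      intro h hmem
      rw [(hHS_indep h).measure_inter_preimage_eq_mul _ _
        (measurableSet_singleton h) (measurableSet_singleton k)]
      have h1 : μ (H ⁻¹' {h}) = ENNReal.ofReal (C * q^(h-1)) := hHpmf h hmem
      have h2 : μ (S h ⁻¹' {k})
          = ENNReal.ofReal (((k-1).choose (h-1) : ℝ) * p^h * (1-p)^(k-h)) :=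
        hnb h (Finset.mem_Icc.1 hmem).1 k hk
      rw [h1, h2, ← ENNReal.ofReal_mul (mul_nonneg hC (pow_nonneg hq0 _))]
    rw [Finset.sum_congr rfl hterm, ← ENNReal.ofReal_sum_of_nonneg (fun h _ =>
      mul_nonneg (mul_nonneg hC (pow_nonneg hq0 _))
        (mul_nonneg (mul_nonneg (Nat.cast_nonneg _) (pow_nonneg hp0.le _))
          (pow_nonneg h1p _)))]
    congr 1
    rw [Finset.mul_sum]
    have hsub : Finset.Icc 1 (min k hmax) ⊆ Finset.Icc 1 hmax := by
      intro h hh; simp only [Finset.mem_Icc] at *; omega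
    have hz : ∀ h ∈ Finset.Icc 1 hmax, h ∉ Finset.Icc 1 (min k hmax) →
        C * (((k - 1).choose (h - 1) : ℝ) * p ^ h * (1 - p) ^ (k - h) * q ^ (h - 1)) = 0 := by
      intro h hh hh'
      simp only [Finset.mem_Icc] at hh hh'
      rw [Nat.choose_eq_zero_of_lt (by omega)]
      simp
    rw [Finset.sum_subset hsub hz]
    apply Finset.sum_congr rfl
    intro h _
    ring
  -- g measurable, f independent of g
  have hTmeas : Measurable (fun ω => fun o : Option ℕ => Option.elim o (H ω) (fun i => K i ω)) :=
    measurable_pi_lambda _ (by rintro (_|i); exacts [hHmeas, hKmeas i])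
  have hφmeas : Measurable (fun v : Option ℕ → ℕ => ∑ i ∈ Finset.range (v none), v (some i)) := by
    apply measurable_to_countable'
    intro k
    have hpre : (fun v : Option ℕ → ℕ => ∑ i ∈ Finset.range (v none), v (some i)) ⁻¹' {k}
        = ⋃ n : ℕ, ((fun v : Option ℕ → ℕ => v none) ⁻¹' {n}
            ∩ (fun v : Option ℕ → ℕ => ∑ i ∈ Finset.range n, v (some i)) ⁻¹' {k}) := by
      ext v
      simp only [Set.mem_preimage, Set.mem_singleton_iff, Set.mem_iUnion, Set.mem_inter_iff]
      constructor
      · intro hv; exact ⟨v none, rfl, hv⟩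
      · rintro ⟨n, h1, h2⟩; rw [h1]; exact h2
    rw [hpre]
    exact MeasurableSet.iUnion fun n =>
      ((measurable_pi_apply none) (measurableSet_singleton n)).inter
        ((Finset.measurable_sum _ fun i _ => measurable_pi_apply (some i))
          (measurableSet_singleton k))
  have hgφ : g = (fun v : Option ℕ → ℕ => ∑ i ∈ Finset.range (v none), v (some i)) ∘
      (fun ω => fun o : Option ℕ => Option.elim o (H ω) (fun i => K i ω)) := rfl
  have hgmeas : Measurable g := by
    rw [hgφ]; exact hφmeas.comp hTmeas
  have hfg : IndepFun f g μ := by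
    have := hfIndep.comp measurable_id hφmeas
    rwa [Function.id_comp, ← hgφ] at this
  -- cdf of f
  have hfcdf : ∀ t : ℝ, 0 ≤ t → μ {ω | f ω ≤ t} = ENNReal.ofReal (1 - Real.exp (-(β*t))) := by
    intro t ht
    have : {ω | f ω ≤ t} = f ⁻¹' (Set.Iic t) := rfl
    rw [this, ← Measure.map_apply hfmeas measurableSet_Iic, hfexp,
      withDensity_apply _ measurableSet_Iic, lintegral_exponentialPDF_eq_antiDeriv hβ,
      if_pos ht]
  have hfneg : μ {ω | f ω < 0} = 0 := by
    have : {ω | f ω < 0} = f ⁻¹' (Set.Iio 0) := rfl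
    rw [this, ← Measure.map_apply hfmeas measurableSet_Iio, hfexp,
      withDensity_apply _ measurableSet_Iio, lintegral_exponentialPDF_of_nonpos le_rfl]
  -- final assembly
  have h1p : (0:ℝ) ≤ 1 - p := by linarith
  set E : ℕ → Set Ω := fun k => g ⁻¹' {k} ∩ f ⁻¹' (Set.Iic (δ - k)) with hEdef
  have hEmeas : ∀ k, MeasurableSet (E k) := fun k =>
    (hgmeas (measurableSet_singleton _)).inter (hfmeas measurableSet_Iic)
  have hmain : μ {ω | f ω + ((∑ i ∈ Finset.range (H ω), K i ω : ℕ) : ℝ) ≤ δ}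
      = μ (⋃ k ∈ Finset.Icc 1 ⌊δ⌋₊, E k) := by
    apply le_antisymm
    · have hsub : {ω | f ω + ((∑ i ∈ Finset.range (H ω), K i ω : ℕ) : ℝ) ≤ δ}
          ⊆ (⋃ k ∈ Finset.Icc 1 ⌊δ⌋₊, E k) ∪ ({ω | f ω < 0} ∪ {ω | K 0 ω = 0}) := by
        intro ω hω
        have hω' : f ω + (g ω : ℝ) ≤ δ := hω
        by_cases hf0 : f ω < 0
        · exact Or.inr (Or.inl hf0)
        push_neg at hf0
        by_cases hg0 : g ω = 0
        · refine Or.inr (Or.inr ?_)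
          have h0m : (0 : ℕ) ∈ Finset.range (H ω) := by
            have := (Finset.mem_Icc.1 (hHrange ω)).1
            exact Finset.mem_range.2 (by omega)
          exact (Finset.sum_eq_zero_iff.1 hg0) 0 h0m
        left
        have hk1 : 1 ≤ g ω := Nat.one_le_iff_ne_zero.2 hg0
        have hkδ : (g ω : ℝ) ≤ δ := by
          have : (0:ℝ) ≤ f ω := hf0
          linarith
        have hk2 : g ω ≤ ⌊δ⌋₊ := Nat.le_floor hkδ
        refine Set.mem_biUnion (Finset.mem_Icc.2 ⟨hk1, hk2⟩) ?_
        refine ⟨rfl, ?_⟩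
        simp only [Set.mem_preimage, Set.mem_Iic]
        linarith
      calc μ {ω | f ω + ((∑ i ∈ Finset.range (H ω), K i ω : ℕ) : ℝ) ≤ δ}
          ≤ μ ((⋃ k ∈ Finset.Icc 1 ⌊δ⌋₊, E k) ∪ ({ω | f ω < 0} ∪ {ω | K 0 ω = 0})) :=
            measure_mono hsub
        _ ≤ μ (⋃ k ∈ Finset.Icc 1 ⌊δ⌋₊, E k) + μ ({ω | f ω < 0} ∪ {ω | K 0 ω = 0}) :=
            measure_union_le _ _
        _ = μ (⋃ k ∈ Finset.Icc 1 ⌊δ⌋₊, E k) := by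
            rw [measure_union_null hfneg (hK0 0), add_zero]
    · apply measure_mono
      intro ω hω
      rcases Set.mem_iUnion₂.1 hω with ⟨k, hkmem, hgk, hfk⟩
      simp only [Set.mem_preimage, Set.mem_singleton_iff] at hgk
      simp only [Set.mem_preimage, Set.mem_Iic] at hfk
      show f ω + (g ω : ℝ) ≤ δ
      rw [hgk]
      linarith
  rw [hmain, measure_biUnion_finset ?_ (fun k _ => hEmeas k)]
  rotate_left
  · intro i hi j hj hij
    simp only [Function.onFun, Set.disjoint_left, Set.mem_inter_iff, Set.mem_preimage,
      Set.mem_singleton_iff, hEdef]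
    rintro ω ⟨h1, -⟩ ⟨h2, -⟩
    exact hij (h1 ▸ h2 ▸ rfl)
  have hterm : ∀ k ∈ Finset.Icc 1 ⌊δ⌋₊, μ (E k)
      = ENNReal.ofReal ((C * ∑ h ∈ Finset.Icc 1 (min k hmax),
          ((k - 1).choose (h - 1) : ℝ) * p ^ h * (1 - p) ^ (k - h) * q ^ (h - 1))
            * (1 - Real.exp (-(β * (δ - k))))) := by
    intro k hkmem
    simp only [Finset.mem_Icc] at hkmem
    have hδk : (0:ℝ) ≤ δ - k := by
      have h1 : (k : ℝ) ≤ (⌊δ⌋₊ : ℝ) := Nat.cast_le.2 hkmem.2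
      have h2 : (⌊δ⌋₊ : ℝ) ≤ δ := Nat.floor_le hδ
      linarith
    have hEk : μ (E k) = μ (g ⁻¹' {k}) * μ (f ⁻¹' (Set.Iic (δ - k))) :=
      hfg.symm.measure_inter_preimage_eq_mul _ _ (measurableSet_singleton k) measurableSet_Iic
    have hgk : μ (g ⁻¹' {k}) = ENNReal.ofReal (C * ∑ h ∈ Finset.Icc 1 (min k hmax),
        ((k - 1).choose (h - 1) : ℝ) * p ^ h * (1 - p) ^ (k - h) * q ^ (h - 1)) :=
      hg k hkmem.1
    have hfk : μ (f ⁻¹' (Set.Iic (δ - k))) = ENNReal.ofReal (1 - Real.exp (-(β * (δ - k)))) :=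
      hfcdf (δ - k) hδk
    have hPg : (0:ℝ) ≤ C * ∑ h ∈ Finset.Icc 1 (min k hmax),
        ((k - 1).choose (h - 1) : ℝ) * p ^ h * (1 - p) ^ (k - h) * q ^ (h - 1) :=
      mul_nonneg hC (Finset.sum_nonneg fun h _ =>
        mul_nonneg (mul_nonneg (mul_nonneg (Nat.cast_nonneg _) (pow_nonneg hp0.le _))
          (pow_nonneg h1p _)) (pow_nonneg hq0 _))
    rw [hEk, hgk, hfk, ← ENNReal.ofReal_mul hPg]
  rw [Finset.sum_congr rfl hterm, ← ENNReal.ofReal_sum_of_nonneg (fun k hkmem => by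
    simp only [Finset.mem_Icc] at hkmem
    have hδk : (0:ℝ) ≤ δ - k := by
      have h1 : (k : ℝ) ≤ (⌊δ⌋₊ : ℝ) := Nat.cast_le.2 hkmem.2
      have h2 : (⌊δ⌋₊ : ℝ) ≤ δ := Nat.floor_le hδ
      linarith
    have hcdf : (0:ℝ) ≤ 1 - Real.exp (-(β * (δ - k))) := by
      have : Real.exp (-(β * (δ - k))) ≤ 1 :=
        Real.exp_le_one_iff.mpr (by nlinarith)
      linarith
    exact mul_nonneg (mul_nonneg hC (Finset.sum_nonneg fun h _ =>
      mul_nonneg (mul_nonneg (mul_nonneg (Nat.cast_nonneg _) (pow_nonneg hp0.le _))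
        (pow_nonneg h1p _)) (pow_nonneg hq0 _))) hcdf)]
  congr 1
  simp only [neg_mul]
  rw [Finset.mul_sum]
  apply Finset.sum_congr rfl
  intro k _
  ring
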